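/- For every κ ∈ (0,1] and every fixed real z, the partial derivative of e_κ(z) with respect to κ equals e_κ(z) · H(κz)/κ², where H(u) = −ln(u + √(u² + 1)) + u/√(u² + 1). -/

import Mathlib

noncomputable def ekappa (κ z : ℝ) : ℝ :=
  (κ * z + Real.sqrt (κ ^ 2 * z ^ 2 + 1)) ^ (1 / κ)

noncomputable def Hfun (u : ℝ) : ℝ :=
  -Real.log (u + Real.sqrt (u ^ 2 + 1)) + u / Real.sqrt (u ^ 2 + 1)

lemma gpos (k z : ℝ) : 0 < k * z + Real.sqrt (k ^ 2 * z ^ 2 + 1) := by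
  have h1 : |k * z| < Real.sqrt (k ^ 2 * z ^ 2 + 1) := by
    rw [← Real.sqrt_sq_eq_abs]
    exact Real.sqrt_lt_sqrt (sq_nonneg _) (by nlinarith [sq_nonneg (k * z)])
  have h2 := neg_abs_le (k * z)
  linarith

theorem ekappa_hasDerivAt_kappa :
    ∀ κ ∈ Set.Ioc (0 : ℝ) 1, ∀ z : ℝ,
      HasDerivAt (fun k : ℝ => ekappa k z)
        (ekappa κ z * Hfun (κ * z) / κ ^ 2) κ := by
  intro κ hκ z
  have hκ0 : (0:ℝ) < κ := hκ.1
  have hκne : κ ≠ 0 := ne_of_gt hκ0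
  set s := Real.sqrt (κ ^ 2 * z ^ 2 + 1) with hs
  have hspos : 0 < s := Real.sqrt_pos.mpr (by positivity)
  have hgpos : 0 < κ * z + s := gpos κ z
  have hq : HasDerivAt (fun k : ℝ => k ^ 2 * z ^ 2 + 1) (2 * κ * z ^ 2) κ := by
    have := ((hasDerivAt_pow 2 κ).mul_const (z ^ 2)).add_const 1
    simpa [mul_comm, mul_assoc] using this
  have hsqrt : HasDerivAt (fun k : ℝ => Real.sqrt (k ^ 2 * z ^ 2 + 1))
      (2 * κ * z ^ 2 / (2 * s)) κ := hq.sqrt (by positivity)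
  have hg : HasDerivAt (fun k : ℝ => k * z + Real.sqrt (k ^ 2 * z ^ 2 + 1))
      (z + 2 * κ * z ^ 2 / (2 * s)) κ := by
    have := ((hasDerivAt_id κ).mul_const z).add hsqrt
    simpa [Pi.add_def] using this
  have hlog : HasDerivAt
      (fun k : ℝ => Real.log (k * z + Real.sqrt (k ^ 2 * z ^ 2 + 1)))
      ((z + 2 * κ * z ^ 2 / (2 * s)) / (κ * z + s)) κ := hg.log (ne_of_gt hgpos)
  have hinv : HasDerivAt (fun k : ℝ => 1 / k) (-(1 / κ ^ 2)) κ := by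
    simpa [one_div] using hasDerivAt_inv hκne
  have hprod : HasDerivAt
      (fun k : ℝ => (1 / k) * Real.log (k * z + Real.sqrt (k ^ 2 * z ^ 2 + 1)))
      (-(1 / κ ^ 2) * Real.log (κ * z + s)
        + (1 / κ) * ((z + 2 * κ * z ^ 2 / (2 * s)) / (κ * z + s))) κ := hinv.mul hlog
  have hexp := hprod.exp
  have heq : (fun k : ℝ => ekappa k z)
      = fun k : ℝ =>
        Real.exp ((1 / k) * Real.log (k * z + Real.sqrt (k ^ 2 * z ^ 2 + 1))) := by
    funext k
    rw [ekappa, Real.rpow_def_of_pos (gpos k z), mul_comm]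
  rw [heq]
  convert hexp using 1
  have he : Real.exp ((1 / κ) * Real.log (κ * z + s)) = ekappa κ z := by
    rw [ekappa, Real.rpow_def_of_pos hgpos, mul_comm]
  rw [he]
  have h2 : (κ * z) ^ 2 + 1 = κ ^ 2 * z ^ 2 + 1 := by ring
  rw [Hfun, h2, ← hs]
  field_simp
  ring
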